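/- If D_h is skew-symmetric and U, V : ℝ → ℝ^{dN} solve the variational (linearized) equation (I_N ⊗ K)·Ẇ + (D_h ⊗ M)·W = S''(z_h(t))·W along a solution z_h, then the total discrete symplectic form Σ_{j=0}^{N−1} ⟨K·U_j(t), V_j(t)⟩ is constant in time. -/

import Mathlib

open Matrix
open scoped Kronecker

private lemma dot_skew {n : Type*} [Fintype n] [DecidableEq n]
    (A : Matrix n n ℝ) (hA : Aᵀ = -A) (x y : n → ℝ) :
    (A *ᵥ x) ⬝ᵥ y = -((A *ᵥ y) ⬝ᵥ x) := by
  rw [dotProduct_comm, dotProduct_mulVec, ← mulVec_transpose, hA, neg_mulVec,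
    neg_dotProduct]

private lemma dot_symm {n : Type*} [Fintype n] [DecidableEq n]
    (A : Matrix n n ℝ) (hA : Aᵀ = A) (x y : n → ℝ) :
    (A *ᵥ x) ⬝ᵥ y = (A *ᵥ y) ⬝ᵥ x := by
  rw [dotProduct_comm, dotProduct_mulVec, ← mulVec_transpose, hA]

private lemma hasDerivAt_form {n : Type*} [Fintype n]
    (A : Matrix n n ℝ) (U V : ℝ → n → ℝ) (u' v' : n → ℝ) (t : ℝ)
    (hU : HasDerivAt U u' t) (hV : HasDerivAt V v' t) :
    HasDerivAt (fun t => (A *ᵥ U t) ⬝ᵥ V t)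
      ((A *ᵥ u') ⬝ᵥ V t + (A *ᵥ U t) ⬝ᵥ v') t := by
  have h : HasDerivAt (fun t => ∑ p, (∑ q, A p q * U t q) * V t p)
      (∑ p, ((∑ q, A p q * u' q) * V t p + (∑ q, A p q * U t q) * v' p)) t := by
    refine HasDerivAt.fun_sum fun p _ => ?_
    exact (HasDerivAt.fun_sum fun q _ =>
      ((hasDerivAt_pi.mp hU q).const_mul (A p q))).mul (hasDerivAt_pi.mp hV p)
  simpa [mulVec, dotProduct, Finset.sum_add_distrib] using h

/-- Preservation of total discrete symplecticity: if `U`, `V` solve the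
variational equation `(I_N ⊗ K) Ẇ + (D_h ⊗ M) W = H(t) W` with `D_h`
skew-symmetric and `H(t)` block-diagonal with symmetric blocks, then
`Σ_j ⟨K U_j(t), V_j(t)⟩` is constant in time. -/
theorem stmt11 (N d : ℕ) (hN : 1 ≤ N) (hd : 1 ≤ d)
    (K M : Matrix (Fin d) (Fin d) ℝ)
    (hK : Kᵀ = -K) (hM : Mᵀ = -M)
    (Dh : Matrix (Fin N) (Fin N) ℝ) (hDh : Dhᵀ = -Dh)
    (B : ℝ → Fin N → Matrix (Fin d) (Fin d) ℝ)
    (hB : ∀ t j, (B t j)ᵀ = B t j)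
    (H : ℝ → Matrix (Fin N × Fin d) (Fin N × Fin d) ℝ)
    (hH : ∀ t p q, H t p q = if p.1 = q.1 then B t p.1 p.2 q.2 else 0)
    (U V : ℝ → (Fin N × Fin d → ℝ))
    (hU : Differentiable ℝ U) (hV : Differentiable ℝ V)
    (hUeq : ∀ t,
      ((1 : Matrix (Fin N) (Fin N) ℝ) ⊗ₖ K) *ᵥ (deriv U t)
        + (Dh ⊗ₖ M) *ᵥ (U t) = H t *ᵥ U t)
    (hVeq : ∀ t,
      ((1 : Matrix (Fin N) (Fin N) ℝ) ⊗ₖ K) *ᵥ (deriv V t)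
        + (Dh ⊗ₖ M) *ᵥ (V t) = H t *ᵥ V t) :
    ∀ t s,
      (∑ j : Fin N, (K *ᵥ fun i => U t (j, i)) ⬝ᵥ (fun i => V t (j, i)))
      = ∑ j : Fin N, (K *ᵥ fun i => U s (j, i)) ⬝ᵥ (fun i => V s (j, i)) := by
  set A : Matrix (Fin N × Fin d) (Fin N × Fin d) ℝ :=
    (1 : Matrix (Fin N) (Fin N) ℝ) ⊗ₖ K with hA
  set C : Matrix (Fin N × Fin d) (Fin N × Fin d) ℝ := Dh ⊗ₖ M with hC
  have hAskew : Aᵀ = -A := by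
    rw [hA, ← kroneckerMap_transpose, transpose_one, hK]
    ext ⟨j, i⟩ ⟨j', i'⟩
    simp [kroneckerMap_apply]
  have hCsymm : Cᵀ = C := by
    rw [hC, ← kroneckerMap_transpose, hDh, hM]
    ext ⟨j, i⟩ ⟨j', i'⟩
    simp [kroneckerMap_apply]
  have hHsymm : ∀ t, (H t)ᵀ = H t := by
    intro t
    ext p q
    simp only [transpose_apply, hH]
    rcases eq_or_ne p.1 q.1 with h | h
    · simp [h, ← congrFun (congrFun (hB t q.1) q.2) p.2]
    · simp [h, Ne.symm h]
  -- the conserved functional as a matrix expression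
  have hform : ∀ (x y : Fin N × Fin d → ℝ),
      (A *ᵥ x) ⬝ᵥ y
        = ∑ j : Fin N, (K *ᵥ fun i => x (j, i)) ⬝ᵥ (fun i => y (j, i)) := by
    intro x y
    simp only [hA, dotProduct, mulVec, Fintype.sum_prod_type, kroneckerMap_apply,
      Matrix.one_apply]
    congr 1; ext j; congr 1; ext i
    congr 1
    rw [Finset.sum_comm]
    simp [Finset.sum_ite_eq', mul_comm]
  set F : ℝ → ℝ := fun t => (A *ᵥ U t) ⬝ᵥ V t with hF
  have hderiv : ∀ t, HasDerivAt F 0 t := by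
    intro t
    have h := hasDerivAt_form A U V (deriv U t) (deriv V t) t
      (hU t).hasDerivAt (hV t).hasDerivAt
    have hAu : A *ᵥ deriv U t = H t *ᵥ U t - C *ᵥ U t := by
      rw [eq_sub_iff_add_eq]; exact hUeq t
    have hAv : A *ᵥ deriv V t = H t *ᵥ V t - C *ᵥ V t := by
      rw [eq_sub_iff_add_eq]; exact hVeq t
    have hzero :
        (A *ᵥ deriv U t) ⬝ᵥ V t + (A *ᵥ U t) ⬝ᵥ deriv V t = 0 := by
      rw [dot_skew A hAskew (U t) (deriv V t), hAu, hAv,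
        sub_dotProduct, sub_dotProduct,
        dot_symm (H t) (hHsymm t) (V t) (U t), dot_symm C hCsymm (V t) (U t)]
      ring
    rw [hF]
    simpa [hzero] using h
  have hconst : ∀ t s, F t = F s := by
    intro t s
    exact is_const_of_deriv_eq_zero (fun x => (hderiv x).differentiableAt)
      (fun x => (hderiv x).deriv) t s
  intro t s
  rw [← hform (U t) (V t), ← hform (U s) (V s)]
  exact hconst t s
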